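/- Let A be a commutative ring, M an A-module with no nonzero I-torsion for an ideal I = (f_1, ..., f_r) of A. Then the map Hom_A(I, M) → M^r sending ψ to (ψ(f_1), ..., ψ(f_r)) is injective, and its image consists exactly of the r-tuples (m_1, ..., m_r) such that f_i m_j = f_j m_i for all i, j. -/

import Mathlib

/-- Let `A` be a commutative ring, `I = (f 1, ..., f r)`, and `M` an `A`-module with no
nonzero `I`-torsion.  Then the map `Hom_A(I, M) → M^r`, `ψ ↦ (ψ (f i))_i`, is injective,
and its image consists exactly of the tuples `(m i)_i` with `f i • m j = f j • m i`. -/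
theorem hom_ideal_injective_and_range
    (A : Type*) [CommRing A] (M : Type*) [AddCommGroup M] [Module A M]
    (r : ℕ) (f : Fin r → A)
    (hM : ∀ m : M, (∃ n : ℕ, ∀ x ∈ (Ideal.span (Set.range f)) ^ n, x • m = 0) → m = 0) :
    Function.Injective
      (fun (ψ : ↥(Ideal.span (Set.range f)) →ₗ[A] M) (i : Fin r) =>
        ψ ⟨f i, Ideal.subset_span ⟨i, rfl⟩⟩) ∧
    Set.range
      (fun (ψ : ↥(Ideal.span (Set.range f)) →ₗ[A] M) (i : Fin r) =>
        ψ ⟨f i, Ideal.subset_span ⟨i, rfl⟩⟩) =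
      {m : Fin r → M | ∀ i j, f i • m j = f j • m i} := by
  set I := Ideal.span (Set.range f) with hI
  -- key torsion fact with n = 1
  have key : ∀ m : M, (∀ i, f i • m = 0) → m = 0 := by
    intro m hm
    refine hM m ⟨1, ?_⟩
    rw [pow_one]
    intro x hx
    induction hx using Submodule.span_induction with
    | mem y hy => obtain ⟨i, rfl⟩ := hy; exact hm i
    | zero => simp
    | add y z _ _ hy hz => rw [add_smul, hy, hz, add_zero]
    | smul a y _ hy => rw [smul_eq_mul, mul_smul, hy, smul_zero]
  constructor
  · intro ψ₁ ψ₂ h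
    ext x
    refine sub_eq_zero.mp (key _ fun i => ?_)
    have hfi : f i • x = (x : A) • (⟨f i, Ideal.subset_span ⟨i, rfl⟩⟩ : I) := by
      ext; simp [mul_comm]
    have h1 : f i • ψ₁ x = (x : A) • ψ₁ ⟨f i, Ideal.subset_span ⟨i, rfl⟩⟩ := by
      rw [← map_smul, hfi, map_smul]
    have h2 : f i • ψ₂ x = (x : A) • ψ₂ ⟨f i, Ideal.subset_span ⟨i, rfl⟩⟩ := by
      rw [← map_smul, hfi, map_smul]
    have := congrFun h i
    simp only at this
    rw [smul_sub, h1, h2, this, sub_self]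
  · ext m
    constructor
    · rintro ⟨ψ, rfl⟩ i j
      simp only
      have hij : (f i) • (⟨f j, Ideal.subset_span ⟨j, rfl⟩⟩ : I)
          = (f j) • (⟨f i, Ideal.subset_span ⟨i, rfl⟩⟩ : I) := by
        ext; simp [mul_comm]
      rw [← map_smul, hij, map_smul]
    · intro hm
      -- build ψ
      classical
      set π : (Fin r → A) →ₗ[A] A := Fintype.linearCombination A f with hπ
      set g : (Fin r → A) →ₗ[A] M := Fintype.linearCombination A m with hg
      have hrange : LinearMap.range π = I := by
        rw [hπ, Fintype.range_linearCombination]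
      set π' : (Fin r → A) →ₗ[A] I := π.codRestrict I (fun a => hrange ▸ LinearMap.mem_range_self π a) with hπ'
      have hsurj : Function.Surjective π' := by
        rintro ⟨x, hx⟩
        rw [← hrange] at hx
        obtain ⟨a, ha⟩ := hx
        exact ⟨a, Subtype.ext ha⟩
      have hker : LinearMap.ker π' ≤ LinearMap.ker g := by
        intro a ha
        have ha' : π a = 0 := congrArg Subtype.val (LinearMap.mem_ker.mp ha)
        rw [LinearMap.mem_ker]
        refine key _ fun j => ?_
        have : f j • g a = (π a) • m j := by
          rw [hg, hπ, Fintype.linearCombination_apply, Fintype.linearCombination_apply,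
            Finset.smul_sum, Finset.sum_smul]
          exact Finset.sum_congr rfl fun i _ => by
            rw [smul_comm (f j), hm j i, smul_assoc]
        rw [this, ha', zero_smul]
      set e : ((Fin r → A) ⧸ LinearMap.ker π') ≃ₗ[A] I := π'.quotKerEquivOfSurjective hsurj with he
      set ψ : I →ₗ[A] M :=
        (Submodule.liftQ (LinearMap.ker π') g hker).comp e.symm.toLinearMap with hψ
      refine ⟨ψ, funext fun i => ?_⟩
      have h1 : π' (Pi.single i 1) = ⟨f i, Ideal.subset_span ⟨i, rfl⟩⟩ := by
        apply Subtype.ext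
        show π (Pi.single i 1) = f i
        rw [hπ, Fintype.linearCombination_apply_single, one_smul]
      have h2 : e.symm ⟨f i, Ideal.subset_span ⟨i, rfl⟩⟩
          = Submodule.Quotient.mk (Pi.single i 1) := by
        apply e.injective
        rw [e.apply_symm_apply, ← h1]
        rfl
      show ψ _ = m i
      rw [hψ, LinearMap.comp_apply]
      simp only [LinearEquiv.coe_coe]
      rw [h2, Submodule.liftQ_apply, hg, Fintype.linearCombination_apply_single, one_smul]
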